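/- Let λ = (λ_j) be a strictly positive sequence and ω = (ω_j) a strictly positive sequence, and define the intrinsic sequences Δ_m := max_{1≤j≤m} ω_j/λ_j, κ_m := max_{1≤j≤m} max(ω_j,1)/λ_j and δ_m := m·Δ_m·log(max(κ_m, m+2))/log(m+2). Then for every m ≥ 1: Δ_m·exp(−δ_m/(6Δ_m)) ≤ exp( −m·( 1/6 − log(m+2)/m )·log(max(κ_m, m+2))/log(m+2) ), and consequently Σ_{m≥1} Δ_m·exp(−δ_m/(6Δ_m)) < ∞; in particular there exists Σ > 0 such that the intrinsic sequences δ and Δ satisfy the summability condition Σ_{m≥1} Δ_m·exp(−δ_m/(6Δ_m)) ≤ Σ. -/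

import Mathlib

open Filter Real

noncomputable section

namespace CircularFLM

/-- A circular functional linear model, described through the Fourier coefficients of the
regressor with respect to the trigonometric basis of `L²[0,1]` (indices `j ≥ 1`), together
with an infinite i.i.d. sequence of copies `(ε_i, X_i)` generating the sample
`(Y_i, X_i)` with `Y_i = ⟨β, X_i⟩ + σ ε_i`.  `Xc i j ω` is the `j`-th Fourier coefficient
`[X_i]_j` of the `i`-th copy of the regressor. -/
structure Model where
  Ω : Type
  [mΩ : MeasurableSpace Ω]
  P : MeasureTheory.Measure Ω
  [probP : MeasureTheory.IsProbabilityMeasure P]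
  σ : ℝ
  σ_pos : 0 < σ
  /-- the eigenvalues `λ_j = E [X]_j²`, `j ≥ 1`, of the covariance operator -/
  lam : ℕ → ℝ
  lam_pos : ∀ j, 1 ≤ j → 0 < lam j
  lam_tendsto_zero : Tendsto lam atTop (nhds (0 : ℝ))
  Xc : ℕ → ℕ → Ω → ℝ
  meas_Xc : ∀ i j, Measurable (Xc i j)
  eps : ℕ → Ω → ℝ
  meas_eps : ∀ i, Measurable (eps i)
  /-- `X` is centered -/
  Xc_centered : ∀ j, 1 ≤ j → ∫ ω, Xc 0 j ω ∂P = 0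
  /-- second-order stationarity: the Fourier coefficients have variances `λ_j` ... -/
  Xc_var : ∀ j, 1 ≤ j → ∫ ω, (Xc 0 j ω) ^ 2 ∂P = lam j
  /-- ... and are uncorrelated -/
  Xc_uncorr : ∀ j k, 1 ≤ j → 1 ≤ k → j ≠ k → ∫ ω, Xc 0 j ω * Xc 0 k ω ∂P = 0
  /-- `E‖X‖² < ∞` -/
  X_sq_int : MeasureTheory.Integrable (fun ω => ∑' j : ℕ, (Xc 0 (j + 1) ω) ^ 2) P
  /-- the error is centered with variance one ... -/
  eps_centered : ∫ ω, eps 0 ω ∂P = 0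
  eps_var : ∫ ω, (eps 0 ω) ^ 2 ∂P = 1
  /-- ... and uncorrelated with the regressor -/
  eps_uncorr : ∀ j, 1 ≤ j → ∫ ω, eps 0 ω * Xc 0 j ω ∂P = 0
  /-- the copies `(ε_i, X_i)` are independent ... -/
  iid_indep : ProbabilityTheory.iIndepFun
    (fun i ω => ((eps i ω : ℝ), fun j => Xc i j ω)) P
  /-- ... and identically distributed -/
  iid_ident : ∀ i : ℕ,
    MeasureTheory.Measure.map (fun ω => ((eps i ω : ℝ), fun j => Xc i j ω)) P
      = MeasureTheory.Measure.map (fun ω => ((eps 0 ω : ℝ), fun j => Xc 0 j ω)) P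

open MeasureTheory ProbabilityTheory

attribute [instance] Model.mΩ Model.probP

/-- the response `Y_i = ⟨β, X_i⟩ + σ ε_i` for slope Fourier coefficients `b` -/
def Model.Y (M : Model) (b : ℕ → ℝ) (i : ℕ) (ω : M.Ω) : ℝ :=
  (∑' j : ℕ, b (j + 1) * M.Xc i (j + 1) ω) + M.σ * M.eps i ω

/-- `σ_Y² = Var(Y)` -/
def Model.varY (M : Model) (b : ℕ → ℝ) : ℝ := variance (M.Y b 0) M.P

/-- `E‖X‖²` -/
def Model.EX2 (M : Model) : ℝ := ∫ ω, ∑' j : ℕ, (M.Xc 0 (j + 1) ω) ^ 2 ∂M.P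

/-- `X ∈ 𝒳ᵏ_η`, i.e. `sup_j E|[X]_j/√λ_j|ᵏ ≤ η` -/
def Model.momX (M : Model) (k : ℕ) (η : ℝ) : Prop :=
  ∀ j, 1 ≤ j → Integrable (fun ω => |M.Xc 0 j ω / Real.sqrt (M.lam j)| ^ k) M.P ∧
    ∫ ω, |M.Xc 0 j ω / Real.sqrt (M.lam j)| ^ k ∂M.P ≤ η

/-- `E|Y/σ_Y|ᵏ ≤ η` -/
def Model.momY (M : Model) (b : ℕ → ℝ) (k : ℕ) (η : ℝ) : Prop :=
  Integrable (fun ω => |M.Y b 0 ω / Real.sqrt (M.varY b)| ^ k) M.P ∧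
    ∫ ω, |M.Y b 0 ω / Real.sqrt (M.varY b)| ^ k ∂M.P ≤ η

/-- the series `⟨β, X_i⟩ = Σ_j [β]_j [X_i]_j` converges almost surely -/
def Model.innerSummable (M : Model) (b : ℕ → ℝ) : Prop :=
  ∀ i, ∀ᵐ ω ∂M.P, Summable (fun j : ℕ => b (j + 1) * M.Xc i (j + 1) ω)

/-- `[ĝ]_j = n⁻¹ Σ_i Y_i [X_i]_j` -/
def Model.ghat (M : Model) (b : ℕ → ℝ) (n j : ℕ) (ω : M.Ω) : ℝ :=
  (n : ℝ)⁻¹ * ∑ i ∈ Finset.range n, M.Y b i ω * M.Xc i j ω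

/-- `λ̂_j = n⁻¹ Σ_i [X_i]_j²` -/
def Model.lamhat (M : Model) (n j : ℕ) (ω : M.Ω) : ℝ :=
  (n : ℝ)⁻¹ * ∑ i ∈ Finset.range n, (M.Xc i j ω) ^ 2

/-- the `j`-th coefficient of `Φ̂_ĝ`, i.e. `([ĝ]_j/λ̂_j)·1{λ̂_j ≥ 1/n}` -/
def Model.phiGhat (M : Model) (b : ℕ → ℝ) (n j : ℕ) (ω : M.Ω) : ℝ :=
  if 1 / (n : ℝ) ≤ M.lamhat n j ω then M.ghat b n j ω / M.lamhat n j ω else 0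

/-- the `j`-th coefficient of the orthogonal series estimator `β̂_m` -/
def Model.bhat (M : Model) (b : ℕ → ℝ) (n m j : ℕ) (ω : M.Ω) : ℝ :=
  if 1 ≤ j ∧ j ≤ m then M.phiGhat b n j ω else 0

/-- the contrast `Υ(t) = ‖t‖²_ω − 2⟨t, Φ̂_ĝ⟩_ω` of a coefficient sequence `t` -/
def Model.contrast (M : Model) (w b : ℕ → ℝ) (n : ℕ) (t : ℕ → ℝ) (ω : M.Ω) : ℝ :=
  (∑' j : ℕ, w (j + 1) * t (j + 1) ^ 2)
    - 2 * ∑' j : ℕ, w (j + 1) * t (j + 1) * M.phiGhat b n (j + 1) ω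

/-- the penalty `pen(m) = 192 σ_Y² η δ_m / n` -/
def Model.pen (M : Model) (b : ℕ → ℝ) (η : ℝ) (δ : ℕ → ℝ) (n m : ℕ) : ℝ :=
  192 * M.varY b * η * δ m / n

/-- the `𝓕_ω`-risk `E‖β̂_{m̂} − β‖²_ω` of the estimator with (data-driven) dimension `mhat` -/
def Model.risk (M : Model) (w b : ℕ → ℝ) (n : ℕ) (mhat : M.Ω → ℕ) : ℝ :=
  ∫ ω, ∑' j : ℕ, w (j + 1) * (M.bhat b n (mhat ω) (j + 1) ω - b (j + 1)) ^ 2 ∂M.P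

/-- `β ∈ 𝓕ʳ_γ`, the ellipsoid `‖β‖²_γ ≤ r` -/
def inEllipsoid (γ : ℕ → ℝ) (r : ℝ) (b : ℕ → ℝ) : Prop :=
  Summable (fun j : ℕ => γ (j + 1) * b (j + 1) ^ 2) ∧
    ∑' j : ℕ, γ (j + 1) * b (j + 1) ^ 2 ≤ r

/-- Assumption 1 on the weight sequences `ω` (here `w`) and `γ` -/
def Assumption1 (w γ : ℕ → ℝ) : Prop :=
  (∀ j, 1 ≤ j → 0 < w j) ∧ (∀ j, 1 ≤ j → 0 < γ j) ∧ w 1 = 1 ∧ γ 1 = 1 ∧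
    (∀ j k, 1 ≤ j → j ≤ k → (γ k)⁻¹ ≤ (γ j)⁻¹) ∧
    Tendsto (fun j => (γ j)⁻¹) atTop (nhds (0 : ℝ)) ∧
    (∀ j k, 1 ≤ j → j ≤ k → w k / γ k ≤ w j / γ j) ∧
    Tendsto (fun j => w j / γ j) atTop (nhds (0 : ℝ))

/-- `M_n = argmax{1 ≤ M ≤ n : δ_M ≤ δ_1 n min(ω_M, 1)}` -/
def Mseq (w δ : ℕ → ℝ) (n : ℕ) : ℕ :=
  sSup {M : ℕ | 1 ≤ M ∧ M ≤ n ∧ δ M ≤ δ 1 * n * min (w M) 1}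

/-- `N_n = argmax{1 ≤ N ≤ n : max_{1≤j≤N} ω_j ≤ n}` -/
def Nseq (w : ℕ → ℝ) (n : ℕ) : ℕ :=
  sSup {N : ℕ | 1 ≤ N ∧ N ≤ n ∧ ∀ j, 1 ≤ j → j ≤ N → w j ≤ n}

/-- Assumption 2 on the sequences `δ`, `Δ` and `M = (M_n)` (relative to `λ` and `ω`) -/
def Assumption2 (lam w δ Δ : ℕ → ℝ) (Sig : ℝ) : Prop :=
  (∀ j k, 1 ≤ j → j ≤ k → δ j ≤ δ k) ∧ (∀ j k, 1 ≤ j → j ≤ k → Δ j ≤ Δ k) ∧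
    (∀ m, 1 ≤ m → ∑ j ∈ Finset.Icc 1 m, w j / lam j ≤ δ m) ∧
    (∀ m, 1 ≤ m → ∀ j, 1 ≤ j → j ≤ m → w j / lam j ≤ Δ m) ∧
    Summable (fun m : ℕ => Δ (m + 1) * Real.exp (-δ (m + 1) / (6 * Δ (m + 1)))) ∧
    (∑' m : ℕ, Δ (m + 1) * Real.exp (-δ (m + 1) / (6 * Δ (m + 1)))) ≤ Sig ∧
    (∀ n : ℕ, 1 ≤ n → ∀ j, 1 ≤ j → j ≤ Mseq w δ n → 2 / (n : ℝ) ≤ lam j)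

/-- `m̂` is a minimizer of the penalized contrast over `{1, …, Mn}` -/
def Model.IsSelection (M : Model) (w b δ : ℕ → ℝ) (η : ℝ) (n Mn : ℕ)
    (mhat : M.Ω → ℕ) : Prop :=
  Measurable mhat ∧ ∀ ω, (1 ≤ mhat ω ∧ mhat ω ≤ Mn) ∧
    ∀ m, 1 ≤ m → m ≤ Mn →
      M.contrast w b n (fun j => M.bhat b n (mhat ω) j ω) ω + M.pen b η δ n (mhat ω)
        ≤ M.contrast w b n (fun j => M.bhat b n m j ω) ω + M.pen b η δ n m

/-- `max_{1 ≤ j ≤ m} f j` -/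
def maxIcc (f : ℕ → ℝ) (m : ℕ) : ℝ := sSup (f '' Set.Icc 1 m)

/-- the intrinsic choice `Δ_m = max_{1≤j≤m} ω_j/λ_j` -/
def intrinsicDelta (lam w : ℕ → ℝ) (m : ℕ) : ℝ := maxIcc (fun j => w j / lam j) m

/-- the intrinsic `κ_m = max_{1≤j≤m} max(ω_j,1)/λ_j` -/
def intrinsicKappa (lam w : ℕ → ℝ) (m : ℕ) : ℝ := maxIcc (fun j => max (w j) 1 / lam j) m

/-- the intrinsic choice `δ_m = m Δ_m log(κ_m ∨ (m+2)) / log(m+2)` -/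
def intrinsicdelta (lam w : ℕ → ℝ) (m : ℕ) : ℝ :=
  (m : ℝ) * intrinsicDelta lam w m
    * (Real.log (max (intrinsicKappa lam w m) ((m : ℝ) + 2)) / Real.log ((m : ℝ) + 2))

/-- the estimated `Δ̂_m` -/
def Model.Deltahat (M : Model) (w : ℕ → ℝ) (n m : ℕ) (ω : M.Ω) : ℝ :=
  maxIcc (fun j => if 1 / (n : ℝ) ≤ M.lamhat n j ω then w j / M.lamhat n j ω else 0) m

/-- the estimated `κ̂_m` -/
def Model.kappahat (M : Model) (w : ℕ → ℝ) (n m : ℕ) (ω : M.Ω) : ℝ :=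
  maxIcc (fun j => if 1 / (n : ℝ) ≤ M.lamhat n j ω then max (w j) 1 / M.lamhat n j ω else 0) m

/-- the estimated `δ̂_m` -/
def Model.deltahat (M : Model) (w : ℕ → ℝ) (n m : ℕ) (ω : M.Ω) : ℝ :=
  (m : ℝ) * M.Deltahat w n m ω
    * (Real.log (max (M.kappahat w n m ω) ((m : ℝ) + 2)) / Real.log ((m : ℝ) + 2))

/-- the random penalty `p̂en(m) = 1920 σ_Y² η δ̂_m / n` -/
def Model.penhat (M : Model) (w b : ℕ → ℝ) (η : ℝ) (n m : ℕ) (ω : M.Ω) : ℝ :=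
  1920 * M.varY b * η * M.deltahat w n m ω / n

/-- the random upper bound `M̂_n = argmax{1 ≤ M ≤ N_n : λ̂_M/(M max(ω_M,1)) ≥ (log n)/n}` -/
def Model.MhatSeq (M : Model) (w : ℕ → ℝ) (n : ℕ) (ω : M.Ω) : ℕ :=
  sSup {Mm : ℕ | 1 ≤ Mm ∧ Mm ≤ Nseq w n ∧
    Real.log n / n ≤ M.lamhat n Mm ω / (Mm * max (w Mm) 1)}

/-- `m̂` is a minimizer of the fully data-driven penalized contrast over `{1, …, M̂_n}` -/
def Model.IsSelectionRand (M : Model) (w b : ℕ → ℝ) (η : ℝ) (n : ℕ)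
    (mhat : M.Ω → ℕ) : Prop :=
  Measurable mhat ∧ ∀ ω, (1 ≤ mhat ω ∧ mhat ω ≤ M.MhatSeq w n ω) ∧
    ∀ m, 1 ≤ m → m ≤ M.MhatSeq w n ω →
      M.contrast w b n (fun j => M.bhat b n (mhat ω) j ω) ω + M.penhat w b η n (mhat ω) ω
        ≤ M.contrast w b n (fun j => M.bhat b n m j ω) ω + M.penhat w b η n m ω

/-- Assumption 3 on `M = (M_n)`, `m† = (m†_n)` and `N = (N_n)` for the intrinsic sequences -/
def Assumption3 (lam w γ : ℕ → ℝ) (mdag : ℕ → ℕ) (ς : ℝ) : Prop :=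
  (∀ n : ℕ, 1 ≤ n → ∀ j, 1 ≤ j → j ≤ Mseq w (intrinsicdelta lam w) n → 2 / (n : ℝ) ≤ lam j) ∧
    (∀ n : ℕ, 1 ≤ n → ∀ m : ℕ, Mseq w (intrinsicdelta lam w) n < m →
      lam m / (m * max (w m) 1) ≤ Real.log n / (2 * n)) ∧
    1 ≤ ς ∧
    (∀ n : ℕ, 1 ≤ n → 1 ≤ mdag n ∧
      ς⁻¹ ≤ γ (mdag n) * intrinsicdelta lam w (mdag n) / (n * w (mdag n)) ∧
      γ (mdag n) * intrinsicdelta lam w (mdag n) / (n * w (mdag n)) ≤ ς) ∧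
    (∀ n : ℕ, 1 ≤ n → ∀ m, 1 ≤ m → m ≤ mdag n →
      2 * Real.log n / n ≤ lam m / (m * max (w m) 1)) ∧
    (∀ n : ℕ, 1 ≤ n → Mseq w (intrinsicdelta lam w) n ≤ Nseq w n ∧ Nseq w n ≤ n)

/-- `sup_{t ∈ B_m} |⟨t, v⟩_ω|²` where `v` is (the coefficient sequence of) a function and
`B_m` is the unit ball of `span(φ_1,…,φ_m)` w.r.t. `‖·‖_ω`  -/
def ballSup (w : ℕ → ℝ) (m : ℕ) (v : ℕ → ℝ) : ℝ :=
  sSup {x : ℝ | ∃ c : ℕ → ℝ, (∑ j ∈ Finset.Icc 1 m, w j * c j ^ 2) ≤ 1 ∧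
    x = |∑ j ∈ Finset.Icc 1 m, w j * c j * v j| ^ 2}

/-- the event `Ω_{Y_i, X_i}` -/
def Model.goodEvent (M : Model) (b w δ : ℕ → ℝ) (n i : ℕ) : Set M.Ω :=
  {ω | |M.Y b i ω / Real.sqrt (M.varY b)| ≤ (n : ℝ) ^ ((1 : ℝ) / 6) ∧
    ∀ j, 1 ≤ j → j ≤ Mseq w δ n → |M.Xc i j ω / Real.sqrt (M.lam j)| ≤ (n : ℝ) ^ ((1 : ℝ) / 6)}

/-- the Fourier coefficients `[ĥ]_j` -/
def Model.hhat (M : Model) (b w δ : ℕ → ℝ) (n j : ℕ) (ω : M.Ω) : ℝ :=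
  (n : ℝ)⁻¹ * ∑ i ∈ Finset.range n,
    ((M.goodEvent b w δ n i).indicator (fun ω' => M.Y b i ω' * M.Xc i j ω') ω
      - ∫ ω', (M.goodEvent b w δ n i).indicator (fun ω' => M.Y b i ω' * M.Xc i j ω') ω' ∂M.P)

/-- the Fourier coefficients `[f̂]_j` -/
def Model.fhat (M : Model) (b w δ : ℕ → ℝ) (n j : ℕ) (ω : M.Ω) : ℝ :=
  (n : ℝ)⁻¹ * ∑ i ∈ Finset.range n,
    ((M.goodEvent b w δ n i)ᶜ.indicator (fun ω' => M.Y b i ω' * M.Xc i j ω') ω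
      - ∫ ω', (M.goodEvent b w δ n i)ᶜ.indicator (fun ω' => M.Y b i ω' * M.Xc i j ω') ω' ∂M.P)

lemma le_maxIcc {f : ℕ → ℝ} {m j : ℕ} (h1 : 1 ≤ j) (h2 : j ≤ m) :
    f j ≤ maxIcc f m := by
  apply le_csSup (((Set.finite_Icc 1 m).image f).bddAbove)
  exact ⟨j, ⟨h1, h2⟩, rfl⟩

lemma maxIcc_le {f : ℕ → ℝ} {m : ℕ} (hm : 1 ≤ m) {c : ℝ}
    (h : ∀ j, 1 ≤ j → j ≤ m → f j ≤ c) : maxIcc f m ≤ c := by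
  refine csSup_le ?_ ?_
  · exact ⟨f 1, Set.mem_image_of_mem f (Set.mem_Icc.mpr ⟨le_refl 1, hm⟩)⟩
  · rintro x ⟨j, ⟨h1, h2⟩, rfl⟩; exact h j h1 h2

lemma intrinsicDelta_pos (lam w : ℕ → ℝ) (hlam : ∀ j, 1 ≤ j → 0 < lam j)
    (hw : ∀ j, 1 ≤ j → 0 < w j) {m : ℕ} (hm : 1 ≤ m) :
    0 < intrinsicDelta lam w m := by
  have h1 : w 1 / lam 1 ≤ intrinsicDelta lam w m :=
    le_maxIcc (f := fun j => w j / lam j) le_rfl hm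
  have : 0 < w 1 / lam 1 := div_pos (hw 1 le_rfl) (hlam 1 le_rfl)
  linarith

lemma intrinsicDelta_le_kappa (lam w : ℕ → ℝ) (hlam : ∀ j, 1 ≤ j → 0 < lam j)
    {m : ℕ} (hm : 1 ≤ m) :
    intrinsicDelta lam w m ≤ intrinsicKappa lam w m := by
  apply maxIcc_le hm
  intro j h1 h2
  have h : w j / lam j ≤ max (w j) 1 / lam j := by
    gcongr
    · exact (hlam j h1).le
    · exact le_max_left _ _
  exact h.trans (le_maxIcc (f := fun j => max (w j) 1 / lam j) h1 h2)

/-- Key pointwise bound. -/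
lemma intrinsic_key (lam w : ℕ → ℝ) (hlam : ∀ j, 1 ≤ j → 0 < lam j)
    (hw : ∀ j, 1 ≤ j → 0 < w j) {m : ℕ} (hm : 1 ≤ m) :
    intrinsicDelta lam w m
        * Real.exp (-intrinsicdelta lam w m / (6 * intrinsicDelta lam w m))
      ≤ Real.exp (-((m : ℝ) * ((1 : ℝ) / 6 - Real.log ((m : ℝ) + 2) / (m : ℝ))
          * (Real.log (max (intrinsicKappa lam w m) ((m : ℝ) + 2))
            / Real.log ((m : ℝ) + 2)))) := by
  set Δ := intrinsicDelta lam w m with hΔdef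
  set L := max (intrinsicKappa lam w m) ((m : ℝ) + 2) with hLdef
  have hm1 : (1 : ℝ) ≤ (m : ℝ) := by exact_mod_cast hm
  have hm2 : (1 : ℝ) < (m : ℝ) + 2 := by linarith
  have hlog : 0 < Real.log ((m : ℝ) + 2) := Real.log_pos hm2
  have hΔpos : 0 < Δ := intrinsicDelta_pos lam w hlam hw hm
  have hLpos : 0 < L := lt_of_lt_of_le (by linarith) (le_max_right _ _)
  have hΔL : Δ ≤ L := (intrinsicDelta_le_kappa lam w hlam hm).trans (le_max_left _ _)
  have h1 : -intrinsicdelta lam w m / (6 * Δ)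
      = -((m : ℝ) * Real.log L / (6 * Real.log ((m : ℝ) + 2))) := by
    rw [intrinsicdelta, ← hΔdef, ← hLdef]
    field_simp
  have h2 : -((m : ℝ) * ((1 : ℝ) / 6 - Real.log ((m : ℝ) + 2) / (m : ℝ))
        * (Real.log L / Real.log ((m : ℝ) + 2)))
      = Real.log L + (-((m : ℝ) * Real.log L / (6 * Real.log ((m : ℝ) + 2)))) := by
    have hmne : (m : ℝ) ≠ 0 := by linarith
    field_simp
    ring
  rw [h1, h2, Real.exp_add, Real.exp_log hLpos]
  exact mul_le_mul_of_nonneg_right hΔL (Real.exp_nonneg _)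

lemma log_le_sixth {x : ℝ} (hx : 149 ≤ x) : Real.log (x + 2) ≤ x / 6 := by
  have h0 : (0 : ℝ) < x + 2 := by linarith
  have h1 : Real.log (x + 2) = 2 * Real.log (Real.sqrt (x + 2)) := by
    rw [Real.log_sqrt h0.le]; ring
  have h2 : Real.log (Real.sqrt (x + 2)) ≤ Real.sqrt (x + 2) - 1 :=
    Real.log_le_sub_one_of_pos (Real.sqrt_pos.mpr h0)
  have h3 : Real.sqrt (x + 2) ≤ x / 12 := by
    have hle : x + 2 ≤ (x / 12) ^ 2 := by nlinarith
    calc Real.sqrt (x + 2) ≤ Real.sqrt ((x / 12) ^ 2) := Real.sqrt_le_sqrt hle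
      _ = x / 12 := Real.sqrt_sq (by linarith)
  linarith

lemma intrinsic_tail_bound (lam w : ℕ → ℝ) (hlam : ∀ j, 1 ≤ j → 0 < lam j)
    (hw : ∀ j, 1 ≤ j → 0 < w j) {m : ℕ} (hm : 148 ≤ m) :
    intrinsicDelta lam w (m + 1)
        * Real.exp (-intrinsicdelta lam w (m + 1) / (6 * intrinsicDelta lam w (m + 1)))
      ≤ ((m : ℝ) + 3) * Real.exp (-((m : ℝ) + 1) / 6) := by
  have hm1 : 1 ≤ m + 1 := Nat.le_add_left 1 m
  have h1 := intrinsic_key lam w hlam hw hm1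
  refine h1.trans ?_
  set k : ℝ := ((m + 1 : ℕ) : ℝ) with hkdef
  have hk : k = (m : ℝ) + 1 := by push_cast [hkdef]; ring
  have hk149 : (149 : ℝ) ≤ k := by
    rw [hk]; have : (148 : ℝ) ≤ (m : ℝ) := by exact_mod_cast hm
    linarith
  set L := max (intrinsicKappa lam w (m + 1)) (k + 2) with hLdef
  have hk2 : (1 : ℝ) < k + 2 := by linarith
  have hlogpos : 0 < Real.log (k + 2) := Real.log_pos hk2
  have hr1 : 1 ≤ Real.log L / Real.log (k + 2) := by
    rw [le_div_iff₀ hlogpos, one_mul]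
    exact Real.log_le_log (by linarith) (le_max_right _ _)
  have ha : 0 ≤ k / 6 - Real.log (k + 2) := by
    have := log_le_sixth hk149; linarith
  have hEq : k * ((1 : ℝ) / 6 - Real.log (k + 2) / k)
      = k / 6 - Real.log (k + 2) := by
    have hkne : k ≠ 0 := by linarith
    field_simp
  have hE : -(k * ((1 : ℝ) / 6 - Real.log (k + 2) / k)
        * (Real.log L / Real.log (k + 2)))
      ≤ Real.log (k + 2) - k / 6 := by
    rw [hEq]
    have := mul_le_mul_of_nonneg_left hr1 ha
    rw [mul_one] at this
    linarith
  have hfin : Real.exp (Real.log (k + 2) - k / 6)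
      = ((m : ℝ) + 3) * Real.exp (-((m : ℝ) + 1) / 6) := by
    rw [Real.exp_sub, Real.exp_log (by linarith), hk, neg_div, Real.exp_neg]
    ring
  calc Real.exp (-(k * ((1 : ℝ) / 6 - Real.log (k + 2) / k)
        * (Real.log L / Real.log (k + 2))))
      ≤ Real.exp (Real.log (k + 2) - k / 6) := Real.exp_le_exp.mpr hE
    _ = ((m : ℝ) + 3) * Real.exp (-((m : ℝ) + 1) / 6) := hfin

/-- The intrinsic sequences `δ` and `Δ` always satisfy the summability condition of
Assumption 2. -/
theorem statement18 (lam w : ℕ → ℝ) (hlam : ∀ j, 1 ≤ j → 0 < lam j)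
    (hw : ∀ j, 1 ≤ j → 0 < w j) :
    (∀ m : ℕ, 1 ≤ m →
      intrinsicDelta lam w m
          * Real.exp (-intrinsicdelta lam w m / (6 * intrinsicDelta lam w m))
        ≤ Real.exp (-((m : ℝ) * ((1 : ℝ) / 6 - Real.log ((m : ℝ) + 2) / (m : ℝ))
            * (Real.log (max (intrinsicKappa lam w m) ((m : ℝ) + 2))
              / Real.log ((m : ℝ) + 2))))) ∧
    Summable (fun m : ℕ => intrinsicDelta lam w (m + 1)
      * Real.exp (-intrinsicdelta lam w (m + 1) / (6 * intrinsicDelta lam w (m + 1)))) ∧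
    ∃ Sig : ℝ, 0 < Sig ∧
      (∑' m : ℕ, intrinsicDelta lam w (m + 1)
        * Real.exp (-intrinsicdelta lam w (m + 1) / (6 * intrinsicDelta lam w (m + 1))))
        ≤ Sig := by
  have hpos : ∀ m : ℕ, 0 ≤ intrinsicDelta lam w (m + 1)
      * Real.exp (-intrinsicdelta lam w (m + 1) / (6 * intrinsicDelta lam w (m + 1))) :=
    fun m => mul_nonneg (intrinsicDelta_pos lam w hlam hw (Nat.le_add_left 1 m)).le
      (Real.exp_nonneg _)
  have hr : (0 : ℝ) < Real.exp (-1 / 6) := Real.exp_pos _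
  have hr1 : Real.exp (-1 / 6 : ℝ) < 1 := Real.exp_lt_one_iff.mpr (by norm_num)
  have hg : Summable (fun m : ℕ => ((m : ℝ) + 3) * Real.exp (-((m : ℝ) + 1) / 6)) := by
    have ha : Summable (fun m : ℕ => (m : ℝ) * Real.exp (-1 / 6 : ℝ) ^ m) := by
      simpa using summable_pow_mul_geometric_of_norm_lt_one 1
        (r := Real.exp (-1 / 6 : ℝ)) (by rw [Real.norm_eq_abs, abs_of_pos hr]; exact hr1)
    have hb : Summable (fun m : ℕ => (3 : ℝ) * Real.exp (-1 / 6 : ℝ) ^ m) :=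
      (summable_geometric_of_lt_one hr.le hr1).mul_left 3
    have h1 : Summable (fun m : ℕ => ((m : ℝ) + 3) * Real.exp (-1 / 6 : ℝ) ^ m) := by
      refine (ha.add hb).congr fun m => ?_
      ring
    refine (h1.mul_left (Real.exp (-1 / 6 : ℝ))).congr fun m => ?_
    have hx : Real.exp (-((m : ℝ) + 1) / 6) = Real.exp (-1 / 6 : ℝ)
        * Real.exp (-1 / 6 : ℝ) ^ m := by
      rw [← Real.exp_nat_mul, ← Real.exp_add]
      congr 1
      ring
    rw [hx]; ring
  have hsum : Summable (fun m : ℕ => intrinsicDelta lam w (m + 1)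
      * Real.exp (-intrinsicdelta lam w (m + 1) / (6 * intrinsicDelta lam w (m + 1)))) := by
    rw [← summable_nat_add_iff 148]
    refine Summable.of_nonneg_of_le (fun n => hpos _)
      (fun n => ?_) ((summable_nat_add_iff 148).mpr hg)
    exact intrinsic_tail_bound lam w hlam hw (Nat.le_add_left 148 n)
  refine ⟨fun m hm => intrinsic_key lam w hlam hw hm, hsum, ?_⟩
  have htn : 0 ≤ ∑' m : ℕ, intrinsicDelta lam w (m + 1)
      * Real.exp (-intrinsicdelta lam w (m + 1) / (6 * intrinsicDelta lam w (m + 1))) :=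
    tsum_nonneg hpos
  exact ⟨(∑' m : ℕ, intrinsicDelta lam w (m + 1)
      * Real.exp (-intrinsicdelta lam w (m + 1) / (6 * intrinsicDelta lam w (m + 1)))) + 1,
    by linarith, by linarith⟩

end CircularFLM
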